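/- Let f = Σ_{k≥1} (a_k cos(kt) + b_k sin(kt)) be a smooth vector field on the circle with mean zero, and let J(f) = Σ_{k≥1} (b_k cos(kt) - a_k sin(kt)). Then ω_{c,h}(f, Jf) = (1/2) Σ_{k≥1} θ_k (a_k² + b_k²) where θ_k = 2hk + (c/12)(k³ - k). In particular, if h > 0 and c ≥ 0, then B(f,g) := ω_{c,h}(f, Jg) defines a positive definite inner product on the mean-zero vector fields. -/

import Mathlib

open Real


/-- `ω_{c,h}(f,g) = ∫_0^{2π} ((2h - c/12) f'(t) - (c/12) f'''(t)) g(t) dt/(2π)` -/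
noncomputable def om (c h : ℝ) (f g : ℝ → ℝ) : ℝ :=
  ∫ t in (0:ℝ)..(2 * π), ((2 * h - c / 12) * deriv f t - c / 12 * deriv^[3] f t) * g t / (2 * π)

/-- `θ_k = 2hk + (c/12)(k³ - k)` -/
noncomputable def th (c h : ℝ) (k : ℤ) : ℝ := 2 * h * k + c / 12 * ((k : ℝ) ^ 3 - k)


section aux
open intervalIntegral


lemma int_cos_int (m : ℤ) : ∫ t in (0:ℝ)..(2*π), Real.cos (m * t) = if m = 0 then 2*π else 0 := by
  by_cases hm : m = 0
  · simp [hm]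
  · simp only [hm, if_false]
    have hder : ∀ t ∈ Set.uIcc (0:ℝ) (2*π), HasDerivAt (fun t : ℝ => Real.sin (m*t) / m)
        (Real.cos (m*t)) t := by
      intro t _
      have h1 : HasDerivAt (fun t : ℝ => (m:ℝ) * t) m t := by
        simpa using (hasDerivAt_id t).const_mul (m:ℝ)
      have h2 : HasDerivAt (fun t : ℝ => Real.sin ((m:ℝ)*t)) (Real.cos (m*t) * m) t :=
        (Real.hasDerivAt_sin _).comp t h1
      have h3 := h2.div_const (m:ℝ)
      have hm' : (m:ℝ) ≠ 0 := Int.cast_ne_zero.mpr hm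
      simpa [mul_div_assoc, div_self hm'] using h3
    rw [integral_eq_sub_of_hasDerivAt hder ((by fun_prop : Continuous fun t : ℝ => _).intervalIntegrable _ _)]
    have : (m:ℝ) * (2*π) = ((2*m : ℤ):ℝ) * π := by push_cast; ring
    rw [this, Real.sin_int_mul_pi]
    simp

lemma int_sin_int (m : ℤ) : ∫ t in (0:ℝ)..(2*π), Real.sin (m * t) = 0 := by
  by_cases hm : m = 0
  · simp [hm]
  · have hder : ∀ t ∈ Set.uIcc (0:ℝ) (2*π), HasDerivAt (fun t : ℝ => -Real.cos (m*t) / m)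
        (Real.sin (m*t)) t := by
      intro t _
      have h1 : HasDerivAt (fun t : ℝ => (m:ℝ) * t) m t := by
        simpa using (hasDerivAt_id t).const_mul (m:ℝ)
      have h2 : HasDerivAt (fun t : ℝ => Real.cos ((m:ℝ)*t)) (-Real.sin (m*t) * m) t :=
        (Real.hasDerivAt_cos _).comp t h1
      have h3 := (h2.neg).div_const (m:ℝ)
      have hm' : (m:ℝ) ≠ 0 := Int.cast_ne_zero.mpr hm
      have : Real.sin (m*t) * m / m = Real.sin (m*t) := by field_simp
      simpa [this] using h3
    rw [integral_eq_sub_of_hasDerivAt hder ((by fun_prop : Continuous fun t : ℝ => _).intervalIntegrable _ _)]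
    simp [Real.cos_int_mul_two_pi]


lemma orth (k l : ℕ) (hk : 1 ≤ k) (p q r s : ℝ) :
    (∫ t in (0:ℝ)..(2*π),
      (p * Real.cos (k*t) + q * Real.sin (k*t)) * (r * Real.cos (l*t) + s * Real.sin (l*t)))
      = if k = l then π * (p*r + q*s) else 0 := by
  have key : ∀ t : ℝ, (p * Real.cos (k*t) + q * Real.sin (k*t)) *
      (r * Real.cos (l*t) + s * Real.sin (l*t)) =
      (p*r+q*s)/2 * Real.cos ((((k:ℤ) - l : ℤ) : ℝ) * t)
      + (p*r-q*s)/2 * Real.cos ((((k:ℤ) + l : ℤ) : ℝ) * t)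
      + (q*r-p*s)/2 * Real.sin ((((k:ℤ) - l : ℤ) : ℝ) * t)
      + (p*s+q*r)/2 * Real.sin ((((k:ℤ) + l : ℤ) : ℝ) * t) := by
    intro t
    push_cast
    simp only [sub_mul, add_mul, Real.cos_sub, Real.cos_add, Real.sin_sub, Real.sin_add]
    ring
  have ic : ∀ (e : ℝ) (m : ℤ), IntervalIntegrable (fun t => e * Real.cos ((m:ℝ)*t))
      MeasureTheory.volume 0 (2*π) := fun e m => (by fun_prop : Continuous _).intervalIntegrable _ _
  have is' : ∀ (e : ℝ) (m : ℤ), IntervalIntegrable (fun t => e * Real.sin ((m:ℝ)*t))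
      MeasureTheory.volume 0 (2*π) := fun e m => (by fun_prop : Continuous _).intervalIntegrable _ _
  simp only [key]
  rw [integral_add (((ic _ _).add (ic _ _)).add (is' _ _)) (is' _ _),
      integral_add ((ic _ _).add (ic _ _)) (is' _ _),
      integral_add (ic _ _) (ic _ _),
      integral_const_mul, integral_const_mul, integral_const_mul, integral_const_mul,
      int_cos_int, int_cos_int, int_sin_int, int_sin_int]
  have hkl : (k:ℤ) + l ≠ 0 := by omega
  by_cases h : k = l
  · have : (k:ℤ) - l = 0 := by omega
    have hll : l ≠ 0 := by omega
    simp [h, this, hkl, hll]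
    ring
  · have : (k:ℤ) - l ≠ 0 := by omega
    simp [h, this, hkl]


lemma tp_hasDerivAt (N : ℕ) (A B : ℕ → ℝ) (t : ℝ) :
    HasDerivAt (fun t => ∑ k ∈ Finset.Icc 1 N, (A k * Real.cos (k*t) + B k * Real.sin (k*t)))
      (∑ k ∈ Finset.Icc 1 N, ((k * B k) * Real.cos (k*t) + (-(k * A k)) * Real.sin (k*t))) t := by
  apply HasDerivAt.fun_sum
  intro k _
  have h1 : HasDerivAt (fun t : ℝ => (k:ℝ) * t) k t := by
    simpa using (hasDerivAt_id t).const_mul (k:ℝ)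
  have hc : HasDerivAt (fun t : ℝ => Real.cos ((k:ℝ)*t)) (-Real.sin (k*t) * k) t :=
    (Real.hasDerivAt_cos _).comp t h1
  have hs : HasDerivAt (fun t : ℝ => Real.sin ((k:ℝ)*t)) (Real.cos (k*t) * k) t :=
    (Real.hasDerivAt_sin _).comp t h1
  have := (hc.const_mul (A k)).fun_add (hs.const_mul (B k))
  convert this using 1
  ring

lemma tp_deriv (N : ℕ) (A B : ℕ → ℝ) :
    deriv (fun t => ∑ k ∈ Finset.Icc 1 N, (A k * Real.cos (k*t) + B k * Real.sin (k*t)))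
      = fun t => ∑ k ∈ Finset.Icc 1 N, ((k * B k) * Real.cos (k*t) + (-(k * A k)) * Real.sin (k*t)) :=
  funext fun t => (tp_hasDerivAt N A B t).deriv

end aux


/-- For a mean-zero vector field `f = Σ_{k≥1} (a_k cos(kt) + b_k sin(kt))` and its image
`Jf = Σ_{k≥1} (b_k cos(kt) - a_k sin(kt))` under the almost complex structure `J`, one has
`ω_{c,h}(f, Jf) = (1/2) Σ_{k≥1} θ_k (a_k² + b_k²)`; moreover if `h > 0` and `c ≥ 0` then
`B(f,g) = ω_{c,h}(f, Jg)` is positive definite on the mean-zero vector fields. -/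
theorem om_f_Jf (c h : ℝ) (N : ℕ) (a b : ℕ → ℝ) (f Jf : ℝ → ℝ)
    (hf : f = fun t => ∑ k ∈ Finset.Icc 1 N, (a k * Real.cos (k * t) + b k * Real.sin (k * t)))
    (hJf : Jf = fun t => ∑ k ∈ Finset.Icc 1 N, (b k * Real.cos (k * t) - a k * Real.sin (k * t))) :
    om c h f Jf = (1/2) * ∑ k ∈ Finset.Icc 1 N, th c h k * (a k ^ 2 + b k ^ 2) ∧
    (0 < h → 0 ≤ c → (∃ k ∈ Finset.Icc 1 N, a k ≠ 0 ∨ b k ≠ 0) → 0 < om c h f Jf) := by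
  subst hf hJf
  have d1 := tp_deriv N a b
  have d3 : deriv^[3] (fun t => ∑ k ∈ Finset.Icc 1 N,
        (a k * Real.cos (k*t) + b k * Real.sin (k*t)))
      = fun t => ∑ k ∈ Finset.Icc 1 N,
        ((k * -(k * (k * b k))) * Real.cos (k*t) + (-(k * (k * -(k * a k)))) * Real.sin (k*t)) := by
    show deriv (deriv (deriv _)) = _
    rw [tp_deriv, tp_deriv, tp_deriv]
  have hmain : om c h (fun t => ∑ k ∈ Finset.Icc 1 N,
        (a k * Real.cos (k*t) + b k * Real.sin (k*t)))
      (fun t => ∑ k ∈ Finset.Icc 1 N, (b k * Real.cos (k*t) - a k * Real.sin (k*t)))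
      = (1/2) * ∑ k ∈ Finset.Icc 1 N, th c h k * (a k ^ 2 + b k ^ 2) := by
    unfold om
    simp only [d1, d3]
    have hptw : ∀ t : ℝ,
        ((2 * h - c / 12) * (∑ k ∈ Finset.Icc 1 N,
            ((k * b k) * Real.cos (k*t) + (-(k * a k)) * Real.sin (k*t)))
          - c / 12 * (∑ k ∈ Finset.Icc 1 N,
            ((k * -(k * (k * b k))) * Real.cos (k*t) + (-(k * (k * -(k * a k)))) * Real.sin (k*t))))
          * (∑ l ∈ Finset.Icc 1 N, (b l * Real.cos (l*t) - a l * Real.sin (l*t))) / (2 * π)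
        = ∑ k ∈ Finset.Icc 1 N, ∑ l ∈ Finset.Icc 1 N, (th c h k / (2*π)) *
            ((b k * Real.cos (k*t) + (-(a k)) * Real.sin (k*t)) *
             (b l * Real.cos (l*t) + (-(a l)) * Real.sin (l*t))) := by
      intro t
      have hS : ∀ k ∈ Finset.Icc 1 N,
          (2 * h - c / 12) * ((k * b k) * Real.cos (k*t) + (-(k * a k)) * Real.sin (k*t))
            - c / 12 * ((k * -(k * (k * b k))) * Real.cos (k*t)
              + (-(k * (k * -(k * a k)))) * Real.sin (k*t))
          = th c h k * (b k * Real.cos (k*t) + (-(a k)) * Real.sin (k*t)) := by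
        intro k _
        unfold th
        push_cast
        ring
      have e1 : (2 * h - c / 12) * (∑ k ∈ Finset.Icc 1 N,
            ((k * b k) * Real.cos (k*t) + (-(k * a k)) * Real.sin (k*t)))
          - c / 12 * (∑ k ∈ Finset.Icc 1 N,
            ((k * -(k * (k * b k))) * Real.cos (k*t) + (-(k * (k * -(k * a k)))) * Real.sin (k*t)))
          = ∑ k ∈ Finset.Icc 1 N, th c h k * (b k * Real.cos (k*t) + (-(a k)) * Real.sin (k*t)) := by
        rw [Finset.mul_sum, Finset.mul_sum, ← Finset.sum_sub_distrib]
        exact Finset.sum_congr rfl hS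
      rw [e1, Finset.sum_mul, Finset.sum_div]
      refine Finset.sum_congr rfl fun k _ => ?_
      rw [Finset.mul_sum, Finset.sum_div]
      refine Finset.sum_congr rfl fun l _ => ?_
      have hpi : (2*π) ≠ 0 := by positivity
      field_simp
      ring
    rw [intervalIntegral.integral_congr (g := fun t => ∑ k ∈ Finset.Icc 1 N,
        ∑ l ∈ Finset.Icc 1 N, (th c h k / (2*π)) *
          ((b k * Real.cos (k*t) + (-(a k)) * Real.sin (k*t)) *
           (b l * Real.cos (l*t) + (-(a l)) * Real.sin (l*t))))
        (fun t _ => hptw t)]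
    have hcont : ∀ (k l : ℕ), Continuous fun t => (th c h k / (2*π)) *
        ((b k * Real.cos (k*t) + (-(a k)) * Real.sin (k*t)) *
         (b l * Real.cos (l*t) + (-(a l)) * Real.sin (l*t))) := by
      intro k l; fun_prop
    rw [intervalIntegral.integral_finset_sum (fun k _ =>
      ((continuous_finset_sum (Finset.Icc 1 N) (fun l _ => hcont k l)).intervalIntegrable 0 (2*π)))]
    rw [Finset.mul_sum]
    refine Finset.sum_congr rfl fun k hk => ?_
    rw [intervalIntegral.integral_finset_sum (fun l _ => (hcont k l).intervalIntegrable 0 (2*π))]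
    have hk1 : 1 ≤ k := (Finset.mem_Icc.mp hk).1
    have : ∀ l ∈ Finset.Icc 1 N,
        (∫ t in (0:ℝ)..(2*π), (th c h k / (2*π)) *
          ((b k * Real.cos (k*t) + (-(a k)) * Real.sin (k*t)) *
           (b l * Real.cos (l*t) + (-(a l)) * Real.sin (l*t))))
        = if k = l then (th c h k / (2*π)) * (π * (b k * b l + (-(a k)) * (-(a l)))) else 0 := by
      intro l _
      rw [intervalIntegral.integral_const_mul, orth k l hk1]
      split <;> simp
    rw [Finset.sum_congr rfl this, Finset.sum_ite_eq, if_pos hk]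
    have hpi : π ≠ 0 := Real.pi_ne_zero
    field_simp
    ring
  refine ⟨hmain, fun h0 hc ⟨k, hkmem, hk⟩ => ?_⟩
  rw [hmain]
  have hpos : ∀ j ∈ Finset.Icc 1 N, 0 ≤ th c h j * (a j ^ 2 + b j ^ 2) := by
    intro j hj
    have hj1 : 1 ≤ j := (Finset.mem_Icc.mp hj).1
    have hjr : (1:ℝ) ≤ (j:ℝ) := by exact_mod_cast hj1
    have hcube : 0 ≤ ((j:ℝ)-1) * (j:ℝ) * ((j:ℝ)+1) :=
      mul_nonneg (mul_nonneg (by linarith) (by linarith)) (by linarith)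
    have hth : 0 ≤ th c h j := by
      unfold th
      push_cast
      nlinarith [mul_nonneg h0.le (by linarith : (0:ℝ) ≤ (j:ℝ))]
    positivity
  have hkpos : 0 < th c h k * (a k ^ 2 + b k ^ 2) := by
    have hk1 : 1 ≤ k := (Finset.mem_Icc.mp hkmem).1
    have hjr : (1:ℝ) ≤ (k:ℝ) := by exact_mod_cast hk1
    have hcube : 0 ≤ ((k:ℝ)-1) * (k:ℝ) * ((k:ℝ)+1) :=
      mul_nonneg (mul_nonneg (by linarith) (by linarith)) (by linarith)
    have hth : 0 < th c h k := by
      unfold th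
      push_cast
      nlinarith [mul_pos h0 (by linarith : (0:ℝ) < (k:ℝ))]
    have hab : 0 < a k ^ 2 + b k ^ 2 := by
      rcases hk with h | h
      · nlinarith [mul_self_pos.mpr h, sq_nonneg (b k)]
      · nlinarith [mul_self_pos.mpr h, sq_nonneg (a k)]
    positivity
  have := Finset.sum_pos' hpos ⟨k, hkmem, hkpos⟩
  linarith
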